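/- arXiv:2503.04124 — 8 statements merged into one kernel-verified Lean document; each statement's English description precedes it below -/
import Mathlib

section
/- Let G be a connected triangle-free simple graph on n vertices with n ≥ 4. Then the hop domination number of G satisfies γ_h(G) ≤ n/2 (equivalently, 2·γ_h(G) ≤ n). -/
/-- A set `S` of vertices is a hop dominating set of `G` if every vertex not in `S`
is at distance exactly 2 from some vertex of `S`. -/
def SimpleGraph.IsHopDominatingSet {V : Type*} (G : SimpleGraph V) (S : Finset V) : Prop :=
  ∀ v : V, v ∉ S → ∃ u ∈ S, G.dist u v = 2

/-- The hop domination number of `G`: the minimum cardinality of a hop dominating set. -/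
noncomputable def SimpleGraph.hopDominationNumber {V : Type*} [Fintype V]
    (G : SimpleGraph V) : ℕ :=
  sInf {k : ℕ | ∃ S : Finset V, G.IsHopDominatingSet S ∧ S.card = k}

theorem hop_domination_le_half {V : Type*} [Fintype V] (G : SimpleGraph V)
    (hconn : G.Connected) (htf : G.CliqueFree 3) (hn : 4 ≤ Fintype.card V) :
    2 * G.hopDominationNumber ≤ Fintype.card V := by
  classical
  have hdef : G.hopDominationNumber
      = sInf {k : ℕ | ∃ S : Finset V, G.IsHopDominatingSet S ∧ S.card = k} := rfl
  have hne : ∃ S : Finset V, G.IsHopDominatingSet S ∧ S.card = Fintype.card V :=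
    ⟨Finset.univ, fun v hv => absurd (Finset.mem_univ v) hv, Finset.card_univ⟩
  have hNe : {k : ℕ | ∃ S : Finset V, G.IsHopDominatingSet S ∧ S.card = k}.Nonempty :=
    ⟨Fintype.card V, hne⟩
  by_cases hstar : ∃ v : V, ∀ w, w ≠ v → G.Adj v w
  · -- star case
    obtain ⟨v, hv⟩ := hstar
    obtain ⟨u, hu⟩ : ∃ u : V, u ≠ v := Fintype.exists_ne_of_one_lt_card (by omega) v
    have hS : G.IsHopDominatingSet {v, u} := by
      intro w hw
      simp only [Finset.mem_insert, Finset.mem_singleton, not_or] at hw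
      obtain ⟨hwv, hwu⟩ := hw
      refine ⟨u, by simp, ?_⟩
      have hadjvu : G.Adj v u := hv u hu
      have hadjvw : G.Adj v w := hv w hwv
      have hnadj : ¬ G.Adj u w := by
        intro h
        exact htf {v, u, w} (SimpleGraph.is3Clique_triple_iff.2 ⟨hadjvu, hadjvw, h⟩)
      have hle : G.dist u w ≤ 2 := by
        have := SimpleGraph.dist_le
          (SimpleGraph.Walk.cons hadjvu.symm (SimpleGraph.Walk.cons hadjvw SimpleGraph.Walk.nil))
        simpa using this
      have h0 : G.dist u w ≠ 0 := fun h => hwu (((hconn u w).dist_eq_zero_iff.mp h).symm)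
      have h1 : G.dist u w ≠ 1 := fun h => hnadj (SimpleGraph.dist_eq_one_iff_adj.mp h)
      omega
    have hle2 : sInf {k : ℕ | ∃ S : Finset V, G.IsHopDominatingSet S ∧ S.card = k} ≤ 2 := by
      apply Nat.sInf_le
      refine ⟨{v, u}, hS, ?_⟩
      rw [Finset.card_insert_of_notMem (by simpa using fun h => hu h.symm), Finset.card_singleton]
    omega
  · push_neg at hstar
    -- every vertex has some vertex at distance exactly 2
    have hH : ∀ v : V, ∃ u : V, G.dist u v = 2 := by
      intro v
      obtain ⟨w0, hw0ne, hw0adj⟩ := hstar v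
      set D := {d : ℕ | ∃ w : V, w ≠ v ∧ ¬G.Adj v w ∧ G.dist v w = d} with hD
      have hDne : D.Nonempty := ⟨_, w0, hw0ne, hw0adj, rfl⟩
      obtain ⟨w, hwne, hwadj, hwd⟩ := Nat.sInf_mem hDne
      have hd2 : 2 ≤ sInf D := by
        rcases Nat.lt_or_ge (sInf D) 2 with h | h
        · exfalso
          interval_cases hd : sInf D
          · rw [(hconn v w).dist_eq_zero_iff] at hwd
            exact hwne hwd.symm
          · rw [SimpleGraph.dist_eq_one_iff_adj] at hwd
            exact hwadj hwd
        · exact h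
      rcases Nat.eq_or_lt_of_le hd2 with heq | hlt
      · refine ⟨w, ?_⟩
        rw [SimpleGraph.dist_comm, hwd, ← heq]
      · -- sInf D ≥ 3 : derive contradiction
        exfalso
        have hdw : G.dist w v = sInf D := by rw [SimpleGraph.dist_comm, hwd]
        obtain ⟨p, hp⟩ := hconn.exists_walk_length_eq_dist w v
        cases p with
        | nil =>
          simp only [SimpleGraph.Walk.length_nil] at hp
          omega
        | @cons _ x _ h q =>
          simp only [SimpleGraph.Walk.length_cons] at hp
          have hq : G.dist x v ≤ sInf D - 1 := by
            have := SimpleGraph.dist_le q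
            omega
          have htri : G.dist v w ≤ G.dist v x + G.dist x w := hconn.dist_triangle
          have hxw : G.dist x w ≤ 1 := by
            have := SimpleGraph.dist_le h.symm.toWalk
            simpa using this
          have hvx : G.dist v x = sInf D - 1 := by
            rw [SimpleGraph.dist_comm] at hq
            omega
          have hxne : x ≠ v := by
            intro hxveq
            subst hxveq
            simp [SimpleGraph.dist_self] at hvx
            omega
          have hxnadj : ¬ G.Adj v x := by
            intro hadj
            have := SimpleGraph.dist_eq_one_iff_adj.mpr hadj
            omega
          have : sInf D ≤ sInf D - 1 := Nat.sInf_le ⟨x, hxne, hxnadj, hvx⟩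
          omega
    obtain ⟨S, hS, hcard⟩ := Nat.sInf_mem hNe
    -- every v ∈ S has a hop neighbor outside S
    have key : ∀ v ∈ S, ∃ u ∉ S, G.dist u v = 2 := by
      intro v hvS
      by_contra hcon
      push_neg at hcon
      -- all hop neighbors of v lie in S; then S.erase v is hop dominating
      have herase : G.IsHopDominatingSet (S.erase v) := by
        intro w hw
        by_cases hwv : w = v
        · subst hwv
          obtain ⟨u, hu⟩ := hH w
          have huS : u ∈ S := by
            by_contra huSn
            exact hcon u huSn hu
          have hune : u ≠ w := by
            intro h; subst h
            rw [(hconn u u).dist_eq_zero_iff.2 rfl] at hu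
            omega
          exact ⟨u, Finset.mem_erase.2 ⟨hune, huS⟩, hu⟩
        · have hwS : w ∉ S := fun h => hw (Finset.mem_erase.2 ⟨hwv, h⟩)
          obtain ⟨u, huS, hud⟩ := hS w hwS
          have huv : u ≠ v := by
            intro h; subst h
            have h2 : G.dist w u = 2 := by rw [SimpleGraph.dist_comm]; exact hud
            exact hcon w hwS h2
          exact ⟨u, Finset.mem_erase.2 ⟨huv, huS⟩, hud⟩
      have hlt : (S.erase v).card < S.card := Finset.card_erase_lt_of_mem hvS
      have : sInf {k : ℕ | ∃ S : Finset V, G.IsHopDominatingSet S ∧ S.card = k}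
          ≤ (S.erase v).card := Nat.sInf_le ⟨S.erase v, herase, rfl⟩
      omega
    have hcomp : G.IsHopDominatingSet Sᶜ := by
      intro v hv
      have hvS : v ∈ S := by simpa using hv
      obtain ⟨u, hu1, hu2⟩ := key v hvS
      exact ⟨u, by simpa using hu1, hu2⟩
    have hle : sInf {k : ℕ | ∃ S : Finset V, G.IsHopDominatingSet S ∧ S.card = k}
        ≤ Sᶜ.card := Nat.sInf_le ⟨Sᶜ, hcomp, rfl⟩
    have hc : Sᶜ.card = Fintype.card V - S.card := Finset.card_compl S
    have hle2 : S.card ≤ Fintype.card V := Finset.card_le_univ S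
    omega
end

section
/- Let G be a triangle-free simple graph and let w and w' be two distinct vertices of G such that their open neighborhoods coincide and are nonempty, i.e., ∅ ≠ N_G(w') = N_G(w). Then γ_h(G) ≤ γ_h(G − w), where G − w denotes the graph obtained from G by deleting the vertex w. -/
lemma dist_eq_two_of {V : Type*} {G : SimpleGraph V} {u v x : V} (hne : u ≠ v)
    (hnadj : ¬G.Adj u v) (h1 : G.Adj u x) (h2 : G.Adj x v) : G.dist u v = 2 := by
  have hle : G.dist u v ≤ 2 := by
    have := G.dist_le (SimpleGraph.Walk.cons h1 (SimpleGraph.Walk.cons h2 SimpleGraph.Walk.nil))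
    simpa using this
  have hr : G.Reachable u v := ⟨SimpleGraph.Walk.cons h1 (SimpleGraph.Walk.cons h2 SimpleGraph.Walk.nil)⟩
  have h0 : G.dist u v ≠ 0 := by
    rw [SimpleGraph.dist_ne_zero_iff_ne_and_reachable]; exact ⟨hne, hr⟩
  have h1' : G.dist u v ≠ 1 := fun hd =>
    hnadj (SimpleGraph.dist_eq_one_iff_adj.mp hd)
  omega

lemma dist_eq_two_elim {V : Type*} {G : SimpleGraph V} {u v : V} (h : G.dist u v = 2) :
    ∃ x, G.Adj u x ∧ G.Adj x v ∧ ¬G.Adj u v ∧ u ≠ v := by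
  have hnadj : ¬G.Adj u v := fun hadj => by
    have := SimpleGraph.dist_eq_one_iff_adj.mpr hadj; omega
  have hune : u ≠ v := by
    rintro rfl; rw [SimpleGraph.dist_self] at h; omega
  obtain ⟨p, hp⟩ := SimpleGraph.exists_walk_of_dist_ne_zero (by omega : G.dist u v ≠ 0)
  rw [h] at hp
  cases p with
  | nil => simp at hp
  | cons h1 q =>
    cases q with
    | nil => simp at hp
    | cons h2 r =>
      cases r with
      | nil => exact ⟨_, h1, h2, hnadj, hune⟩
      | cons h3 r' => simp [SimpleGraph.Walk.length_cons] at hp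

theorem hop_domination_delete_twin {V : Type*} [Fintype V] [DecidableEq V]
    (G : SimpleGraph V) (htf : G.CliqueFree 3) (w w' : V) (hne : w ≠ w')
    (hN : (G.neighborSet w).Nonempty) (hNeq : G.neighborSet w' = G.neighborSet w) :
    G.hopDominationNumber ≤
      (G.induce {v : V | v ≠ w}).hopDominationNumber := by
  classical
  set H := G.induce {v : V | v ≠ w} with hH
  have hHadj : ∀ a b : {v : V | v ≠ w}, H.Adj a b ↔ G.Adj (a : V) (b : V) := by
    intro a b; rfl
  have hHne : {k : ℕ | ∃ S : Finset {v : V | v ≠ w},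
      H.IsHopDominatingSet S ∧ S.card = k}.Nonempty :=
    ⟨_, Finset.univ, fun v hv => absurd (Finset.mem_univ v) hv, rfl⟩
  obtain ⟨S', hS', hcard⟩ :
      ∃ S' : Finset {v : V | v ≠ w}, H.IsHopDominatingSet S' ∧
        S'.card = H.hopDominationNumber := Nat.sInf_mem hHne
  have hnadjww' : ¬G.Adj w' w := by
    intro h
    have : w ∈ G.neighborSet w' := h
    rw [hNeq] at this
    exact G.irrefl this
  have hdom : G.IsHopDominatingSet (S'.image Subtype.val) := by
    intro v hv
    by_cases hvw : v = w
    · rw [hvw]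
      have hw'mem : w' ∈ {v : V | v ≠ w} := fun h => hne h.symm
      by_cases hw'S : (⟨w', hw'mem⟩ : {v : V | v ≠ w}) ∈ S'
      · refine ⟨w', Finset.mem_image_of_mem _ hw'S, ?_⟩
        obtain ⟨x, hx⟩ := hN
        have hx' : G.Adj w' x := by
          have : x ∈ G.neighborSet w' := hNeq ▸ hx
          exact this
        exact dist_eq_two_of (fun h => hne h.symm) hnadjww' hx' (G.adj_symm hx)
      · obtain ⟨u', hu'S, hdist⟩ := hS' _ hw'S
        obtain ⟨x', h1, h2, h3, h4⟩ := dist_eq_two_elim hdist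
        refine ⟨(u' : V), Finset.mem_image_of_mem _ hu'S, ?_⟩
        have hadj1 : G.Adj (u' : V) (x' : V) := (hHadj _ _).mp h1
        have hadj2 : G.Adj (x' : V) w' := (hHadj _ _).mp h2
        have hadj2' : G.Adj (x' : V) w := by
          have : (x' : V) ∈ G.neighborSet w' := G.adj_symm hadj2
          rw [hNeq] at this
          exact G.adj_symm this
        have hnadj : ¬G.Adj (u' : V) w := by
          intro h
          have : (u' : V) ∈ G.neighborSet w' := hNeq ▸ (G.adj_symm h)
          exact h3 ((hHadj _ _).mpr (G.adj_symm this))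
        exact dist_eq_two_of u'.2 hnadj hadj1 hadj2'
    · have hvmem : v ∈ {v : V | v ≠ w} := hvw
      have hvS' : (⟨v, hvmem⟩ : {v : V | v ≠ w}) ∉ S' := fun h =>
        hv (Finset.mem_image_of_mem _ h)
      obtain ⟨u', hu'S, hdist⟩ := hS' _ hvS'
      obtain ⟨x', h1, h2, h3, h4⟩ := dist_eq_two_elim hdist
      refine ⟨(u' : V), Finset.mem_image_of_mem _ hu'S, ?_⟩
      have hne' : (u' : V) ≠ v := fun h => h4 (Subtype.ext h)
      have hnadj : ¬G.Adj (u' : V) v := fun h => h3 ((hHadj _ _).mpr h)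
      exact dist_eq_two_of hne' hnadj ((hHadj _ _).mp h1) ((hHadj _ _).mp h2)
  have hc : (S'.image Subtype.val).card = S'.card :=
    Finset.card_image_of_injective _ Subtype.val_injective
  calc G.hopDominationNumber ≤ (S'.image Subtype.val).card :=
        Nat.sInf_le ⟨S'.image Subtype.val, hdom, rfl⟩
    _ = H.hopDominationNumber := by rw [hc, hcard]
end

section
/- Let G be a triangle-free simple graph and let H be a spanning subgraph of G (that is, H has the same vertex set as G and every edge of H is an edge of G). Then γ_h(G) ≤ γ_h(H). -/
lemma dist_two_of_sub {V : Type*} (G H : SimpleGraph V) (htf : G.CliqueFree 3)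
    (hsub : H ≤ G) {u v : V} (h : H.dist u v = 2) : G.dist u v = 2 := by
  obtain ⟨p, hp⟩ := SimpleGraph.exists_walk_of_dist_ne_zero (by omega : H.dist u v ≠ 0)
  rw [h] at hp
  have huv : u ≠ v := by
    rintro rfl; simp [SimpleGraph.dist_self] at h
  match p, hp with
  | .cons (v := w) huw (.cons hwv .nil), _ =>
    have guw : G.Adj u w := hsub huw
    have gwv : G.Adj w v := hsub hwv
    have hnadj : ¬ G.Adj u v := by
      classical
      intro hadj
      exact htf {u, w, v} (SimpleGraph.is3Clique_triple_iff.mpr ⟨guw, hadj, gwv⟩)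
    have hle : G.dist u v ≤ 2 := by
      have := G.dist_le (SimpleGraph.Walk.cons guw (SimpleGraph.Walk.cons gwv .nil))
      simpa using this
    have hne0 : G.dist u v ≠ 0 := by
      rw [SimpleGraph.dist_ne_zero_iff_ne_and_reachable]
      exact ⟨huv, ⟨SimpleGraph.Walk.cons guw (SimpleGraph.Walk.cons gwv .nil)⟩⟩
    have hne1 : G.dist u v ≠ 1 := fun h1 =>
      hnadj (SimpleGraph.dist_eq_one_iff_adj.mp h1)
    omega

theorem hop_domination_spanning_subgraph {V : Type*} [Fintype V]
    (G H : SimpleGraph V) (htf : G.CliqueFree 3) (hsub : H ≤ G) :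
    G.hopDominationNumber ≤ H.hopDominationNumber := by
  have hne : {k : ℕ | ∃ S : Finset V, H.IsHopDominatingSet S ∧ S.card = k}.Nonempty :=
    ⟨(Finset.univ : Finset V).card, Finset.univ, fun v hv => absurd (Finset.mem_univ v) hv, rfl⟩
  obtain ⟨S, hS, hcard⟩ := Nat.sInf_mem hne
  apply le_trans (Nat.sInf_le _) hcard.le
  exact ⟨S, fun v hv => by
    obtain ⟨u, hu, hd⟩ := hS v hv
    exact ⟨u, hu, dist_two_of_sub G H htf hsub hd⟩, rfl⟩
end

section
/- For every integer n ≥ 1, the hop domination number of the path on n vertices satisfies γ_h(P_n) = ⌈⌊n/2⌋/3⌉ + ⌈⌈n/2⌉/3⌉. -/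
open SimpleGraph Finset

lemma pathGraph_exists_walk (n : ℕ) : ∀ (d : ℕ) (u v : Fin n), Nat.dist u.val v.val = d →
    ∃ w : (pathGraph n).Walk u v, w.length = d := by
  intro d
  induction d with
  | zero =>
    intro u v h
    have : u = v := Fin.ext (Nat.eq_of_dist_eq_zero h)
    subst this
    exact ⟨.nil, rfl⟩
  | succ d ih =>
    intro u v h
    rcases lt_trichotomy u.val v.val with hlt | heq | hgt
    · have hw : u.val + 1 < n := lt_of_le_of_lt hlt v.isLt
      have hadj : (pathGraph n).Adj u ⟨u.val + 1, hw⟩ := pathGraph_adj.mpr (Or.inl rfl)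
      have hd : Nat.dist (u.val + 1) v.val = d := by simp [Nat.dist] at h ⊢; omega
      obtain ⟨p, hp⟩ := ih ⟨u.val + 1, hw⟩ v hd
      exact ⟨.cons hadj p, by simp [hp]⟩
    · simp [Nat.dist, heq] at h
    · have h1 : 1 ≤ u.val := by omega
      have hw : u.val - 1 < n := lt_of_le_of_lt (Nat.sub_le _ _) u.isLt
      have hadj : (pathGraph n).Adj u ⟨u.val - 1, hw⟩ := pathGraph_adj.mpr (Or.inr (by simp; omega))
      have hd : Nat.dist (u.val - 1) v.val = d := by simp [Nat.dist] at h ⊢; omega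
      obtain ⟨p, hp⟩ := ih ⟨u.val - 1, hw⟩ v hd
      exact ⟨.cons hadj p, by simp [hp]⟩

lemma pathGraph_natDist_le {n : ℕ} : ∀ {u v : Fin n} (p : (pathGraph n).Walk u v),
    Nat.dist u.val v.val ≤ p.length := by
  intro u v p
  induction p with
  | nil => simp
  | @cons a b c h p ih =>
    have h1 : Nat.dist a.val b.val = 1 := by
      rcases pathGraph_adj.mp h with h' | h' <;> simp [Nat.dist] <;> omega
    calc Nat.dist a.val c.val ≤ Nat.dist a.val b.val + Nat.dist b.val c.val :=
          Nat.dist.triangle_inequality _ _ _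
      _ ≤ 1 + p.length := by rw [h1]; exact Nat.add_le_add_left ih 1
      _ = (SimpleGraph.Walk.cons h p).length := by simp [Nat.add_comm]

lemma pathGraph_dist (n : ℕ) (u v : Fin n) :
    (pathGraph n).dist u v = Nat.dist u.val v.val := by
  obtain ⟨p, hp⟩ := pathGraph_exists_walk n _ u v rfl
  refine le_antisymm (hp ▸ SimpleGraph.dist_le p) ?_
  obtain ⟨q, hq⟩ := SimpleGraph.Reachable.exists_walk_length_eq_dist (G := pathGraph n) ⟨p⟩
  rw [← hq]
  exact pathGraph_natDist_le q

lemma hop_construction (n : ℕ) (hn : 1 ≤ n) :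
    ∃ S : Finset (Fin n), (pathGraph n).IsHopDominatingSet S ∧
      S.card = (n / 2 + 2) / 3 + ((n + 1) / 2 + 2) / 3 := by
  classical
  set T : Finset ℕ :=
    ((range (((n+1)/2 + 2)/3)).image fun k => 2 * min (3*k+1) ((n+1)/2 - 1)) ∪
    ((range ((n/2 + 2)/3)).image fun k => 2 * min (3*k+1) (n/2 - 1) + 1) with hTdef
  have hT : ∀ m ∈ T, m < n := by
    intro m hm
    rw [hTdef, mem_union] at hm
    rcases hm with hm | hm <;> obtain ⟨k, hk, rfl⟩ := mem_image.mp hm <;>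
      rw [mem_range] at hk <;> omega
  refine ⟨T.attachFin hT, ?_, ?_⟩
  · intro v hv
    rw [Finset.mem_attachFin] at hv
    have hvn : v.val < n := v.isLt
    rcases Nat.even_or_odd v.val with ⟨j, hj⟩ | ⟨j, hj⟩
    · -- even case: v = 2j, j < (n+1)/2
      have hpmem : 2 * min (3*(j/3)+1) ((n+1)/2 - 1) ∈ T := by
        rw [hTdef]
        exact mem_union_left _ (mem_image.mpr ⟨j/3, mem_range.mpr (by omega), rfl⟩)
      by_cases hpj : min (3*(j/3)+1) ((n+1)/2 - 1) = j
      · rw [hpj] at hpmem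
        rw [two_mul, ← hj] at hpmem
        exact absurd hpmem hv
      · refine ⟨⟨2 * min (3*(j/3)+1) ((n+1)/2 - 1), hT _ hpmem⟩,
          (Finset.mem_attachFin hT).mpr hpmem, ?_⟩
        rw [pathGraph_dist]
        simp only [Nat.dist]
        omega
    · -- odd case: v = 2j+1, j < n/2
      have hpmem : 2 * min (3*(j/3)+1) (n/2 - 1) + 1 ∈ T := by
        rw [hTdef]
        exact mem_union_right _ (mem_image.mpr ⟨j/3, mem_range.mpr (by omega), rfl⟩)
      by_cases hpj : min (3*(j/3)+1) (n/2 - 1) = j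
      · rw [hpj, ← hj] at hpmem
        exact absurd hpmem hv
      · refine ⟨⟨2 * min (3*(j/3)+1) (n/2 - 1) + 1, hT _ hpmem⟩,
          (Finset.mem_attachFin hT).mpr hpmem, ?_⟩
        rw [pathGraph_dist]
        simp only [Nat.dist]
        omega
  · rw [Finset.card_attachFin, hTdef]
    rw [Finset.card_union_of_disjoint]
    · rw [Finset.card_image_of_injOn, Finset.card_image_of_injOn, Finset.card_range,
        Finset.card_range]
      · omega
      · intro a ha b hb hab
        rw [mem_coe, mem_range] at ha hb
        dsimp only at hab
        omega
      · intro a ha b hb hab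
        rw [mem_coe, mem_range] at ha hb
        dsimp only at hab
        omega
    · rw [Finset.disjoint_left]
      intro a ha hb
      obtain ⟨k, hk, rfl⟩ := mem_image.mp ha
      obtain ⟨k', hk', hEq⟩ := mem_image.mp hb
      omega

lemma hop_lower (n : ℕ) (S : Finset (Fin n))
    (hS : (pathGraph n).IsHopDominatingSet S) :
    (n / 2 + 2) / 3 + ((n + 1) / 2 + 2) / 3 ≤ S.card := by
  classical
  set T := S.image Fin.val with hTdef
  have hTcard : T.card = S.card := Finset.card_image_of_injective _ Fin.val_injective
  have hdom : ∀ v < n, v ∉ T → ∃ u ∈ T, Nat.dist u v = 2 := by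
    intro v hvn hvT
    have hv : (⟨v, hvn⟩ : Fin n) ∉ S := fun h => hvT (mem_image_of_mem _ h)
    obtain ⟨u, huS, hud⟩ := hS _ hv
    refine ⟨u.val, mem_image_of_mem _ huS, ?_⟩
    rwa [pathGraph_dist] at hud
  have key : ∀ r : ℕ, r < 2 →
      ((range n).filter (fun v => v % 2 = r)).card ≤
        3 * (T.filter (fun v => v % 2 = r)).card := by
    intro r hr
    have hsub : (range n).filter (fun v => v % 2 = r) ⊆
        (T.filter (fun v => v % 2 = r)).biUnion (fun u => {u - 2, u, u + 2}) := by
      intro v hv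
      rw [mem_filter, mem_range] at hv
      by_cases hvT : v ∈ T
      · exact mem_biUnion.mpr ⟨v, mem_filter.mpr ⟨hvT, hv.2⟩, by simp⟩
      · obtain ⟨u, huT, hud⟩ := hdom v hv.1 hvT
        have hcase : u % 2 = r ∧ (v = u - 2 ∨ v = u ∨ v = u + 2) := by
          simp only [Nat.dist] at hud
          omega
        refine mem_biUnion.mpr ⟨u, mem_filter.mpr ⟨huT, hcase.1⟩, ?_⟩
        rcases hcase.2 with h | h | h <;> subst h <;> simp
    calc ((range n).filter (fun v => v % 2 = r)).card
        ≤ ((T.filter (fun v => v % 2 = r)).biUnion (fun u => {u - 2, u, u + 2})).card :=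
          Finset.card_le_card hsub
      _ ≤ (T.filter (fun v => v % 2 = r)).card * 3 := by
          apply Finset.card_biUnion_le_card_mul
          intro u _
          apply le_trans (Finset.card_insert_le _ _)
          have h2 : ({u, u + 2} : Finset ℕ).card ≤ 2 :=
            le_trans (Finset.card_insert_le _ _) (by simp)
          omega
      _ = 3 * (T.filter (fun v => v % 2 = r)).card := Nat.mul_comm _ _
  have hE : ((range n).filter (fun v => v % 2 = 0)).card = (n + 1) / 2 := by
    have him : (range n).filter (fun v => v % 2 = 0) =
        (range ((n + 1) / 2)).image (fun j => 2 * j) := by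
      ext a
      simp only [mem_filter, mem_range, mem_image]
      constructor
      · intro ⟨h1, h2⟩; exact ⟨a / 2, by omega, by omega⟩
      · rintro ⟨j, hj, rfl⟩; omega
    rw [him, Finset.card_image_of_injective _ (fun a b => by omega), Finset.card_range]
  have hO : ((range n).filter (fun v => v % 2 = 1)).card = n / 2 := by
    have him : (range n).filter (fun v => v % 2 = 1) =
        (range (n / 2)).image (fun j => 2 * j + 1) := by
      ext a
      simp only [mem_filter, mem_range, mem_image]
      constructor
      · intro ⟨h1, h2⟩; exact ⟨a / 2, by omega, by omega⟩
      · rintro ⟨j, hj, rfl⟩; omega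
    rw [him, Finset.card_image_of_injective _ (fun a b => by omega), Finset.card_range]
  have hsplit : (T.filter (fun v => v % 2 = 0)).card +
      (T.filter (fun v => v % 2 = 1)).card = T.card := by
    have h1 : T.filter (fun v => ¬ v % 2 = 0) = T.filter (fun v => v % 2 = 1) := by
      apply Finset.filter_congr
      intro x _
      constructor <;> omega
    rw [← h1]
    exact Finset.card_filter_add_card_filter_not _
  have k0 := key 0 (by omega)
  have k1 := key 1 (by omega)
  rw [hE] at k0
  rw [hO] at k1
  omega

theorem hop_domination_path (n : ℕ) (hn : 1 ≤ n) :
    (SimpleGraph.pathGraph n).hopDominationNumber =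
      (n / 2 + 2) / 3 + ((n + 1) / 2 + 2) / 3 := by
  obtain ⟨S0, hS0, hc0⟩ := hop_construction n hn
  rw [SimpleGraph.hopDominationNumber]
  apply le_antisymm
  · exact Nat.sInf_le ⟨S0, hS0, hc0⟩
  · obtain ⟨S, hS, hcard⟩ := Nat.sInf_mem (⟨_, S0, hS0, hc0⟩ :
      Set.Nonempty {k : ℕ | ∃ S : Finset (Fin n),
        (pathGraph n).IsHopDominatingSet S ∧ S.card = k})
    rw [← hcard]
    exact hop_lower n S hS
end

section
/- For every integer n ≥ 4, the hop domination number of the cycle C_n satisfies: γ_h(C_n) ≤ (2n+2)/5 if n ∈ {4,7,14}; γ_h(C_n) ≤ (2n+4)/5 if n = 8; and γ_h(C_n) ≤ 2n/5 otherwise (all inequalities understood as 5·γ_h(C_n) ≤ 2n+2, ≤ 2n+4, ≤ 2n respectively). -/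
lemma cycAdj {n : ℕ} (hn : 2 ≤ n) (u v : Fin n) :
    (SimpleGraph.cycleGraph n).Adj u v ↔
      (u.val + 1 = v.val ∨ v.val + 1 = u.val ∨
       (u.val + 1 = n ∧ v.val = 0) ∨ (v.val + 1 = n ∧ u.val = 0)) := by
  rw [SimpleGraph.cycleGraph_adj']
  have hu := u.isLt; have hv := v.isLt
  have key : ∀ a b : Fin n, ((a - b).val = 1) ↔ (a.val = b.val + 1 ∨ a.val + n = b.val + 1) := by
    intro a b
    rw [Fin.sub_def]
    simp only
    have ha := a.isLt; have hb := b.isLt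
    rcases lt_or_ge (n - b.val + a.val) n with h | h
    · rw [Nat.mod_eq_of_lt h]; omega
    · rw [Nat.mod_eq_sub_mod h, Nat.mod_eq_of_lt (by omega)]; omega
  rw [key, key]; omega

lemma distTwo {V : Type*} {G : SimpleGraph V} {u v w : V} (huv : u ≠ v)
    (hna : ¬ G.Adj u v) (h1 : G.Adj u w) (h2 : G.Adj w v) : G.dist u v = 2 := by
  have hle : G.dist u v ≤ 2 := by
    have := SimpleGraph.dist_le (SimpleGraph.Walk.cons h1 h2.toWalk)
    simpa using this
  have hr : G.Reachable u v := ⟨SimpleGraph.Walk.cons h1 h2.toWalk⟩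
  have h0 : G.dist u v ≠ 0 := fun h => huv (hr.dist_eq_zero_iff.mp h)
  have h1' : G.dist u v ≠ 1 := fun h => hna (SimpleGraph.dist_eq_one_iff_adj.mp h)
  omega

lemma cycDistTwo {n : ℕ} (hn : 4 ≤ n) (u v : Fin n)
    (h : u.val + 2 = v.val ∨ u.val + 2 = v.val + n) :
    (SimpleGraph.cycleGraph n).dist u v = 2 := by
  have hn2 : 2 ≤ n := by omega
  have hu := u.isLt; have hv := v.isLt
  obtain ⟨wv, hwlt, hrel⟩ : ∃ wv, wv < n ∧ (u.val + 1 = wv ∨ u.val + 1 = wv + n) := by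
    rcases lt_or_ge (u.val + 1) n with h' | h'
    · exact ⟨u.val + 1, h', Or.inl rfl⟩
    · exact ⟨0, by omega, Or.inr (by omega)⟩
  refine distTwo ?_ ?_ ?_ ?_ (w := ⟨wv, hwlt⟩)
  · intro he; rw [Fin.ext_iff] at he; omega
  · rw [cycAdj hn2]; omega
  · rw [cycAdj hn2]; simp only []; omega
  · rw [cycAdj hn2]; simp only []; omega

lemma hopLe (n : ℕ) (hn : 4 ≤ n) (P : ℕ → Prop) [DecidablePred P] (B : ℕ)
    (hcard : ((Finset.range n).filter P).card ≤ B)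
    (hcov : ∀ m < n, ¬ P m → ∃ u < n, P u ∧
      (u + 2 = m ∨ u + 2 = m + n ∨ m + 2 = u ∨ m + 2 = u + n)) :
    (SimpleGraph.cycleGraph n).hopDominationNumber ≤ B := by
  have hall : ∀ m ∈ (Finset.range n).filter P, m < n := by
    intro m hm; exact Finset.mem_range.mp (Finset.mem_filter.mp hm).1
  set S : Finset (Fin n) := ((Finset.range n).filter P).attachFin hall with hS
  have hdom : (SimpleGraph.cycleGraph n).IsHopDominatingSet S := by
    intro v hv
    have hv' : ¬ P v.val := by
      intro hPv
      exact hv ((Finset.mem_attachFin hall).mpr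
        (Finset.mem_filter.mpr ⟨Finset.mem_range.mpr v.isLt, hPv⟩))
    obtain ⟨u, hu, hPu, hrel⟩ := hcov v.val v.isLt hv'
    refine ⟨⟨u, hu⟩, (Finset.mem_attachFin hall).mpr
      (Finset.mem_filter.mpr ⟨Finset.mem_range.mpr hu, hPu⟩), ?_⟩
    rcases hrel with h | h | h | h
    · exact cycDistTwo hn _ _ (Or.inl h)
    · exact cycDistTwo hn _ _ (Or.inr h)
    · rw [SimpleGraph.dist_comm]; exact cycDistTwo hn _ _ (Or.inl h)
    · rw [SimpleGraph.dist_comm]; exact cycDistTwo hn _ _ (Or.inr h)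
  calc (SimpleGraph.cycleGraph n).hopDominationNumber ≤ S.card :=
        Nat.sInf_le ⟨S, hdom, rfl⟩
    _ = ((Finset.range n).filter P).card := Finset.card_attachFin _ hall
    _ ≤ B := hcard

lemma count23 (c : ℕ) :
    ((Finset.range c).filter (fun m => m % 5 = 2 ∨ m % 5 = 3)).card = (c+2)/5 + (c+1)/5 := by
  induction c with
  | zero => simp
  | succ c ih =>
    rw [Finset.range_add_one, Finset.filter_insert]
    by_cases h : c % 5 = 2 ∨ c % 5 = 3
    · rw [if_pos h, Finset.card_insert_of_notMem (by simp), ih]; omega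
    · rw [if_neg h, ih]; omega

lemma baseCount (n c : ℕ) (hc : c ≤ n) :
    ((Finset.range n).filter (fun m => (m % 5 = 2 ∨ m % 5 = 3) ∧ m < c)).card
      = (c+2)/5 + (c+1)/5 := by
  have e : (Finset.range n).filter (fun m => (m % 5 = 2 ∨ m % 5 = 3) ∧ m < c)
      = (Finset.range c).filter (fun m => m % 5 = 2 ∨ m % 5 = 3) := by
    ext m
    simp only [Finset.mem_filter, Finset.mem_range]
    omega
  rw [e, count23]

lemma cardSubListLe (n : ℕ) (R : ℕ → Prop) [DecidablePred R] (L : List ℕ)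
    (h : ∀ m, R m → m ∈ L) : ((Finset.range n).filter R).card ≤ L.length := by
  refine le_trans (Finset.card_le_card ?_) (List.toFinset_card_le L)
  intro x hx
  rw [List.mem_toFinset]
  exact h x (Finset.mem_filter.mp hx).2

theorem hop_domination_cycle_upper (n : ℕ) (hn : 4 ≤ n) :
    (n = 4 ∨ n = 7 ∨ n = 14 →
      5 * (SimpleGraph.cycleGraph n).hopDominationNumber ≤ 2 * n + 2) ∧
    (n = 8 → 5 * (SimpleGraph.cycleGraph n).hopDominationNumber ≤ 2 * n + 4) ∧
    (n ≠ 4 ∧ n ≠ 7 ∧ n ≠ 14 ∧ n ≠ 8 →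
      5 * (SimpleGraph.cycleGraph n).hopDominationNumber ≤ 2 * n) := by
  refine ⟨?_, ?_, ?_⟩
  · rintro (rfl | rfl | rfl)
    · have h := hopLe 4 (by norm_num) (fun m => m = 0 ∨ m = 1) 2 (by decide) (by decide)
      omega
    · have h := hopLe 7 (by norm_num) (fun m => m = 0 ∨ m = 1 ∨ m = 2) 3 (by decide) (by decide)
      omega
    · have h := hopLe 14 (by norm_num)
        (fun m => m = 0 ∨ m = 1 ∨ m = 2 ∨ m = 7 ∨ m = 8 ∨ m = 9) 6 (by decide) (by decide)
      omega
  · rintro rfl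
    have h := hopLe 8 (by norm_num) (fun m => m = 0 ∨ m = 1 ∨ m = 4 ∨ m = 5) 4
      (by decide) (by decide)
    omega
  · rintro ⟨h4, h7, h14, h8⟩
    by_cases h9 : n = 9
    · subst h9
      have h := hopLe 9 (by norm_num) (fun m => m = 0 ∨ m = 3 ∨ m = 6) 3 (by decide) (by decide)
      omega
    have hr : n % 5 = 0 ∨ n % 5 = 1 ∨ n % 5 = 2 ∨ n % 5 = 3 ∨ n % 5 = 4 := by omega
    rcases hr with hr | hr | hr | hr | hr
    -- r = 0
    · have h := hopLe n hn (fun m => m % 5 = 2 ∨ m % 5 = 3) (2 * (n / 5))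
        (by have := count23 n; rw [this]; omega)
        (by
          intro m hm hP
          have hP' : ¬ (m % 5 = 2 ∨ m % 5 = 3) := hP
          have key : (m + 2 < n ∧ ((m+2) % 5 = 2 ∨ (m+2) % 5 = 3)) ∨
              (2 ≤ m ∧ m - 2 < n ∧ ((m-2) % 5 = 2 ∨ (m-2) % 5 = 3)) := by omega
          rcases key with ⟨h1, h2⟩ | ⟨h1, h1', h2⟩
          · exact ⟨m + 2, h1, h2, by omega⟩
          · exact ⟨m - 2, h1', h2, by omega⟩)
      omega
    -- r = 1
    · have h := hopLe n hn (fun m => m % 5 = 2 ∨ m % 5 = 3) (2 * (n / 5))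
        (by have := count23 n; rw [this]; omega)
        (by
          intro m hm hP
          have hP' : ¬ (m % 5 = 2 ∨ m % 5 = 3) := hP
          have key : (m + 2 < n ∧ ((m+2) % 5 = 2 ∨ (m+2) % 5 = 3)) ∨
              (2 ≤ m ∧ m - 2 < n ∧ ((m-2) % 5 = 2 ∨ (m-2) % 5 = 3)) := by omega
          rcases key with ⟨h1, h2⟩ | ⟨h1, h1', h2⟩
          · exact ⟨m + 2, h1, h2, by omega⟩
          · exact ⟨m - 2, h1', h2, by omega⟩)
      omega
    -- r = 2
    · have hn12 : 12 ≤ n := by omega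
      have h := hopLe n hn
        (fun m => ((m % 5 = 2 ∨ m % 5 = 3) ∧ m < n - 5) ∨ (m = n - 4 ∨ m = n - 3))
        (2 * (n / 5))
        (by
          rw [Finset.filter_or]
          refine le_trans (Finset.card_union_le _ _) ?_
          have h1 := baseCount n (n - 5) (by omega)
          have h2 := cardSubListLe n (fun m => m = n - 4 ∨ m = n - 3) [n - 4, n - 3]
            (by intro m hm; simpa using hm)
          simp only [List.length_cons, List.length_nil] at h2
          omega)
        (by
          intro m hm hP
          have hP' : ¬ (((m % 5 = 2 ∨ m % 5 = 3) ∧ m < n - 5) ∨ (m = n - 4 ∨ m = n - 3)) := hP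
          have key : (m + 2 < n ∧ ((((m+2) % 5 = 2 ∨ (m+2) % 5 = 3) ∧ m + 2 < n - 5) ∨
                (m + 2 = n - 4 ∨ m + 2 = n - 3))) ∨
              (2 ≤ m ∧ m - 2 < n ∧ ((((m-2) % 5 = 2 ∨ (m-2) % 5 = 3) ∧ m - 2 < n - 5) ∨
                (m - 2 = n - 4 ∨ m - 2 = n - 3))) := by omega
          rcases key with ⟨h1, h2⟩ | ⟨h1, h1', h2⟩
          · exact ⟨m + 2, h1, h2, by omega⟩
          · exact ⟨m - 2, h1', h2, by omega⟩)
      omega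
    -- r = 3
    · have hn13 : 13 ≤ n := by omega
      have h := hopLe n hn
        (fun m => ((m % 5 = 2 ∨ m % 5 = 3) ∧ m < n - 6) ∨ (m = n - 5 ∨ m = n - 4 ∨ m = n - 3))
        (2 * (n / 5) + 1)
        (by
          rw [Finset.filter_or]
          refine le_trans (Finset.card_union_le _ _) ?_
          have h1 := baseCount n (n - 6) (by omega)
          have h2 := cardSubListLe n (fun m => m = n - 5 ∨ m = n - 4 ∨ m = n - 3)
            [n - 5, n - 4, n - 3] (by intro m hm; simpa using hm)
          simp only [List.length_cons, List.length_nil] at h2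
          omega)
        (by
          intro m hm hP
          have hP' : ¬ (((m % 5 = 2 ∨ m % 5 = 3) ∧ m < n - 6) ∨
            (m = n - 5 ∨ m = n - 4 ∨ m = n - 3)) := hP
          have key : (m + 2 < n ∧ ((((m+2) % 5 = 2 ∨ (m+2) % 5 = 3) ∧ m + 2 < n - 6) ∨
                (m + 2 = n - 5 ∨ m + 2 = n - 4 ∨ m + 2 = n - 3))) ∨
              (2 ≤ m ∧ m - 2 < n ∧ ((((m-2) % 5 = 2 ∨ (m-2) % 5 = 3) ∧ m - 2 < n - 6) ∨
                (m - 2 = n - 5 ∨ m - 2 = n - 4 ∨ m - 2 = n - 3))) := by omega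
          rcases key with ⟨h1, h2⟩ | ⟨h1, h1', h2⟩
          · exact ⟨m + 2, h1, h2, by omega⟩
          · exact ⟨m - 2, h1', h2, by omega⟩)
      omega
    -- r = 4
    · have hn19 : 19 ≤ n := by omega
      have h := hopLe n hn
        (fun m => ((m % 5 = 2 ∨ m % 5 = 3) ∧ m < n - 12) ∨
          (m = n - 11 ∨ m = n - 10 ∨ m = n - 5 ∨ m = n - 4 ∨ m = n - 3))
        (2 * (n / 5) + 1)
        (by
          rw [Finset.filter_or]
          refine le_trans (Finset.card_union_le _ _) ?_
          have h1 := baseCount n (n - 12) (by omega)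
          have h2 := cardSubListLe n
            (fun m => m = n - 11 ∨ m = n - 10 ∨ m = n - 5 ∨ m = n - 4 ∨ m = n - 3)
            [n - 11, n - 10, n - 5, n - 4, n - 3] (by intro m hm; simpa using hm)
          simp only [List.length_cons, List.length_nil] at h2
          omega)
        (by
          intro m hm hP
          have hP' : ¬ (((m % 5 = 2 ∨ m % 5 = 3) ∧ m < n - 12) ∨
            (m = n - 11 ∨ m = n - 10 ∨ m = n - 5 ∨ m = n - 4 ∨ m = n - 3)) := hP
          have key : (m + 2 < n ∧ ((((m+2) % 5 = 2 ∨ (m+2) % 5 = 3) ∧ m + 2 < n - 12) ∨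
                (m + 2 = n - 11 ∨ m + 2 = n - 10 ∨ m + 2 = n - 5 ∨ m + 2 = n - 4 ∨
                  m + 2 = n - 3))) ∨
              (2 ≤ m ∧ m - 2 < n ∧ ((((m-2) % 5 = 2 ∨ (m-2) % 5 = 3) ∧ m - 2 < n - 12) ∨
                (m - 2 = n - 11 ∨ m - 2 = n - 10 ∨ m - 2 = n - 5 ∨ m - 2 = n - 4 ∨
                  m - 2 = n - 3))) := by omega
          rcases key with ⟨h1, h2⟩ | ⟨h1, h1', h2⟩
          · exact ⟨m + 2, h1, h2, by omega⟩
          · exact ⟨m - 2, h1', h2, by omega⟩)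
      omega
end

section
/- For every integer n ≥ 4 with n ≠ 8, the cycle C_n has a hop dominating set S containing two adjacent vertices such that |S| ≤ (2n+2)/5 (i.e., 5·|S| ≤ 2n+2). -/
open Fin.CommRing

lemma cycle_dist_add_two (n : ℕ) [NeZero n] (hn : 4 ≤ n) (v : Fin n) :
    (SimpleGraph.cycleGraph n).dist (v + 2) v = 2 := by
  obtain ⟨m, rfl⟩ : ∃ m, n = m + 4 := ⟨n - 4, by omega⟩
  have h2 : ((2 : Fin (m + 4)) : ℕ) = 2 := by
    rw [Fin.coe_ofNat_eq_mod]; exact Nat.mod_eq_of_lt (by omega)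
  have h3 : ((3 : Fin (m + 4)) : ℕ) = 3 := by
    rw [Fin.coe_ofNat_eq_mod]; exact Nat.mod_eq_of_lt (by omega)
  have hadj1 : (SimpleGraph.cycleGraph (m + 4)).Adj (v + 2) (v + 1) := by
    rw [SimpleGraph.cycleGraph_adj']
    left
    have : v + 2 - (v + 1) = 1 := by ring
    rw [this, Fin.val_one]
  have hadj2 : (SimpleGraph.cycleGraph (m + 4)).Adj (v + 1) v := by
    rw [SimpleGraph.cycleGraph_adj']
    left
    have : v + 1 - v = 1 := by ring
    rw [this, Fin.val_one]
  have hle : (SimpleGraph.cycleGraph (m + 4)).dist (v + 2) v ≤ 2 := by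
    have := SimpleGraph.dist_le (SimpleGraph.Walk.cons hadj1 (SimpleGraph.Walk.cons hadj2 SimpleGraph.Walk.nil))
    simpa using this
  have hne : v + 2 ≠ v := by
    intro h
    have h' : (2 : Fin (m + 4)) = 0 := by linear_combination h
    rw [Fin.ext_iff, h2] at h'
    simp at h'
  have hnadj : ¬ (SimpleGraph.cycleGraph (m + 4)).Adj (v + 2) v := by
    intro h
    rw [SimpleGraph.cycleGraph_adj'] at h
    rcases h with h | h
    · have : v + 2 - v = 2 := by ring
      rw [this, h2] at h
      omega
    · have hv : v - (v + 2) = 1 := Fin.ext (by rw [h, Fin.val_one])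
      have h3' : (3 : Fin (m + 4)) = 0 := by linear_combination -hv
      rw [Fin.ext_iff, h3] at h3'
      simp at h3'
  have hr : (SimpleGraph.cycleGraph (m + 4)).Reachable (v + 2) v :=
    ⟨SimpleGraph.Walk.cons hadj1 (SimpleGraph.Walk.cons hadj2 SimpleGraph.Walk.nil)⟩
  have h0 : (SimpleGraph.cycleGraph (m + 4)).dist (v + 2) v ≠ 0 := by
    rw [Ne, hr.dist_eq_zero_iff]; exact hne
  have h1 : (SimpleGraph.cycleGraph (m + 4)).dist (v + 2) v ≠ 1 := by
    rw [Ne, SimpleGraph.dist_eq_one_iff_adj]; exact hnadj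
  clear h2 h3 hadj1 hadj2 hne hnadj hr
  omega

/-- Abstract invariant producing hop dominating sets. -/
lemma good (n : ℕ) (hn : 4 ≤ n) (A : Finset ℕ)
    (hsub : ∀ a ∈ A, a < n) (h0 : 0 ∈ A) (h1 : 1 ∈ A)
    (hcov : ∀ v, v + 3 ≤ n → v ∉ A → v + 2 ∈ A ∨ v - 2 ∈ A)
    (hcard : 5 * A.card ≤ 2 * n + 2) :
    ∃ S : Finset (Fin n), (SimpleGraph.cycleGraph n).IsHopDominatingSet S ∧
      (∃ u ∈ S, ∃ v ∈ S, (SimpleGraph.cycleGraph n).Adj u v) ∧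
      5 * S.card ≤ 2 * n + 2 := by
  haveI : NeZero n := ⟨by omega⟩
  refine ⟨A.image (Nat.cast : ℕ → Fin n), ?_, ?_, ?_⟩
  · intro v hv
    have hvA : v.val ∉ A := by
      intro h
      exact hv (Finset.mem_image.mpr ⟨v.val, h, Fin.cast_val_eq_self v⟩)
    have hdist2 : ∀ u : Fin n, (u = v + 2 ∨ u = v - 2) →
        (SimpleGraph.cycleGraph n).dist u v = 2 := by
      rintro u (rfl | rfl)
      · exact cycle_dist_add_two n hn v
      · have := cycle_dist_add_two n hn (v - 2)
        rw [show v - 2 + 2 = v from by ring] at this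
        rw [SimpleGraph.dist_comm]
        exact this
    by_cases hcase : v.val + 3 ≤ n
    · rcases hcov v.val hcase hvA with h | h
      · refine ⟨(v.val + 2 : ℕ), Finset.mem_image.mpr ⟨_, h, rfl⟩, hdist2 _ (Or.inl ?_)⟩
        rw [Nat.cast_add, Fin.cast_val_eq_self]; norm_num
      · have hv2 : 2 ≤ v.val := by
          rcases Nat.lt_or_ge v.val 2 with hlt | hge
          · interval_cases h : v.val <;> simp_all
          · exact hge
        refine ⟨(v.val - 2 : ℕ), Finset.mem_image.mpr ⟨_, h, rfl⟩, hdist2 _ (Or.inr ?_)⟩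
        have h' : ((v.val - 2 : ℕ) : Fin n) + 2 = v := by
          have he : (v.val - 2 : ℕ) + 2 = v.val := by omega
          rw [show (2 : Fin n) = ((2 : ℕ) : Fin n) from rfl, ← Nat.cast_add, he,
            Fin.cast_val_eq_self]
        linear_combination h'

    · -- v.val = n - 2 or n - 1
      have hvlt := v.isLt
      rcases (by omega : v.val = n - 2 ∨ v.val = n - 1) with h | h
      · refine ⟨(0 : ℕ), Finset.mem_image.mpr ⟨0, h0, rfl⟩, hdist2 _ (Or.inl ?_)⟩
        rw [Fin.ext_iff]
        have : ((v + 2 : Fin n) : ℕ) = (v.val + 2) % n := by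
          rw [Fin.add_def, Fin.coe_ofNat_eq_mod, Nat.mod_eq_of_lt (show 2 < n by omega)]
        rw [this, Nat.cast_zero, Fin.val_zero, h,
          show n - 2 + 2 = n by omega, Nat.mod_self]
      · refine ⟨(1 : ℕ), Finset.mem_image.mpr ⟨1, h1, rfl⟩, hdist2 _ (Or.inl ?_)⟩
        rw [Fin.ext_iff]
        have : ((v + 2 : Fin n) : ℕ) = (v.val + 2) % n := by
          rw [Fin.add_def, Fin.coe_ofNat_eq_mod, Nat.mod_eq_of_lt (show 2 < n by omega)]
        rw [this, Nat.cast_one, Fin.val_one', h,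
          show n - 1 + 2 = n + 1 by omega, Nat.add_mod_left]
  · refine ⟨(1 : ℕ), Finset.mem_image.mpr ⟨1, h1, rfl⟩,
           (0 : ℕ), Finset.mem_image.mpr ⟨0, h0, rfl⟩, ?_⟩
    rw [SimpleGraph.cycleGraph_adj']
    left
    rw [Nat.cast_one, Nat.cast_zero, sub_zero, Fin.val_one']
    exact Nat.mod_eq_of_lt (by omega)
  · calc 5 * (A.image (Nat.cast : ℕ → Fin n)).card ≤ 5 * A.card := by
          exact Nat.mul_le_mul_left _ Finset.card_image_le
      _ ≤ 2 * n + 2 := hcard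

lemma exists_A : ∀ n, 4 ≤ n → n ≠ 8 → ∃ A : Finset ℕ, (∀ a ∈ A, a < n) ∧ 0 ∈ A ∧ 1 ∈ A ∧
    (∀ v, v + 3 ≤ n → v ∉ A → v + 2 ∈ A ∨ v - 2 ∈ A) ∧ 5 * A.card ≤ 2 * n + 2 := by
  intro n
  induction n using Nat.strong_induction_on with
  | _ n ih =>
    intro hn hn8
    by_cases hsmall : n ≤ 13
    · interval_cases n
      · exact ⟨{0, 1}, by decide, by decide, by decide, by intro v hv hvA; have hb : v ≤ 10 := (by omega); revert hv hvA; interval_cases v <;> decide, by decide⟩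
      · exact ⟨{0, 1}, by decide, by decide, by decide, by intro v hv hvA; have hb : v ≤ 10 := (by omega); revert hv hvA; interval_cases v <;> decide, by decide⟩
      · exact ⟨{0, 1}, by decide, by decide, by decide, by intro v hv hvA; have hb : v ≤ 10 := (by omega); revert hv hvA; interval_cases v <;> decide, by decide⟩
      · exact ⟨{0, 1, 2}, by decide, by decide, by decide, by intro v hv hvA; have hb : v ≤ 10 := (by omega); revert hv hvA; interval_cases v <;> decide, by decide⟩
      · exact absurd rfl hn8
      · exact ⟨{0, 1, 4, 5}, by decide, by decide, by decide, by intro v hv hvA; have hb : v ≤ 10 := (by omega); revert hv hvA; interval_cases v <;> decide, by decide⟩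
      · exact ⟨{0, 1, 5, 6}, by decide, by decide, by decide, by intro v hv hvA; have hb : v ≤ 10 := (by omega); revert hv hvA; interval_cases v <;> decide, by decide⟩
      · exact ⟨{0, 1, 5, 6}, by decide, by decide, by decide, by intro v hv hvA; have hb : v ≤ 10 := (by omega); revert hv hvA; interval_cases v <;> decide, by decide⟩
      · exact ⟨{0, 1, 6, 7}, by decide, by decide, by decide, by intro v hv hvA; have hb : v ≤ 10 := (by omega); revert hv hvA; interval_cases v <;> decide, by decide⟩
      · exact ⟨{0, 1, 2, 7, 8}, by decide, by decide, by decide, by intro v hv hvA; have hb : v ≤ 10 := (by omega); revert hv hvA; interval_cases v <;> decide, by decide⟩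
    · obtain ⟨A, hsub, h0, h1, hcov, hcard⟩ := ih (n - 5) (by omega) (by omega) (by omega)
      refine ⟨A ∪ {n - 5, n - 4}, ?_, ?_, ?_, ?_, ?_⟩
      · intro a ha
        rcases Finset.mem_union.mp ha with h | h
        · exact lt_of_lt_of_le (hsub a h) (by omega)
        · simp at h; omega
      · exact Finset.mem_union_left _ h0
      · exact Finset.mem_union_left _ h1
      · intro v hv hvA
        have hv5 : n - 5 ∉ A := fun h => by have := hsub _ h; omega
        have hv4 : n - 4 ∉ A := fun h => by have := hsub _ h; omega
        simp only [Finset.mem_union, Finset.mem_insert, Finset.mem_singleton, not_or] at hvA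
        obtain ⟨hvA', hne5, hne4⟩ := hvA
        by_cases hc : v + 3 ≤ n - 5
        · rcases hcov v hc hvA' with h | h
          · exact Or.inl (Finset.mem_union_left _ h)
          · exact Or.inr (Finset.mem_union_left _ h)
        · -- v ∈ {n-7, n-6, n-3} (n-5, n-4 excluded)
          rcases (by omega : v = n - 7 ∨ v = n - 6 ∨ v = n - 3) with h | h | h
          · exact Or.inl (by subst h; apply Finset.mem_union_right; simp; left; omega)
          · exact Or.inl (by subst h; apply Finset.mem_union_right; simp; right; omega)
          · exact Or.inr (by subst h; apply Finset.mem_union_right; simp; left; omega)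
      · have hv5 : n - 5 ∉ A := fun h => by have := hsub _ h; omega
        have hv4 : n - 4 ∉ A := fun h => by have := hsub _ h; omega
        have hcard2 : (A ∪ {n - 5, n - 4}).card ≤ A.card + 2 := by
          calc (A ∪ {n - 5, n - 4}).card ≤ A.card + ({n - 5, n - 4} : Finset ℕ).card :=
                Finset.card_union_le _ _
            _ ≤ A.card + 2 := by
                have : ({n - 5, n - 4} : Finset ℕ).card ≤ 2 := Finset.card_insert_le _ _ |>.trans (by simp)
                omega
        calc 5 * (A ∪ {n - 5, n - 4}).card ≤ 5 * (A.card + 2) :=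
              Nat.mul_le_mul_left _ hcard2
          _ ≤ 2 * n + 2 := by omega

theorem hop_domination_cycle_adjacent_pair (n : ℕ) (hn : 4 ≤ n) (hn8 : n ≠ 8) :
    ∃ S : Finset (Fin n), (SimpleGraph.cycleGraph n).IsHopDominatingSet S ∧
      (∃ u ∈ S, ∃ v ∈ S, (SimpleGraph.cycleGraph n).Adj u v) ∧
      5 * S.card ≤ 2 * n + 2 := by
  obtain ⟨A, hsub, h0, h1, hcov, hcard⟩ := exists_A n hn hn8
  exact good n hn A hsub h0 h1 hcov hcard
end

section
/- For every integer t ≥ 1, let G be the graph obtained from the star K_{1,t} by subdividing each edge with three vertices (so that each edge of the star becomes a path with 3 internal vertices, and G has 4t + 1 vertices). Then γ_h(G) = 2t; in particular γ_h(G) = (|V(G)| − 1)/2. -/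
/-- The graph obtained from the star `K_{1,t}` by subdividing each edge with three vertices:
the center is `none`, and the `i`-th branch is the path
`none — (i,0) — (i,1) — (i,2) — (i,3)`, whose last vertex `(i,3)` is the `i`-th leaf. -/
def subdividedStar (t : ℕ) : SimpleGraph (Option (Fin t × Fin 4)) :=
  SimpleGraph.fromRel (fun p q =>
    (p = none ∧ ∃ i : Fin t, q = some (i, 0)) ∨
    (∃ (i : Fin t) (j k : Fin 4), p = some (i, j) ∧ q = some (i, k) ∧ (j : ℕ) + 1 = (k : ℕ)))

section general
variable {V : Type*} {G : SimpleGraph V} {u v w : V}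

private lemma exists_mid (h : G.dist u v = 2) : ∃ w, G.Adj u w ∧ G.Adj w v := by
  have hr : G.Reachable u v := SimpleGraph.Reachable.of_dist_ne_zero (by omega)
  obtain ⟨p, hp⟩ := hr.exists_walk_length_eq_dist
  rw [h] at hp
  cases p with
  | nil => simp at hp
  | cons h1 q =>
    cases q with
    | nil => simp at hp
    | cons h2 q2 =>
      cases q2 with
      | nil => exact ⟨_, h1, h2⟩
      | cons h3 q3 => simp [SimpleGraph.Walk.length_cons] at hp

private lemma dist_eq_two' (hne : u ≠ v) (hna : ¬G.Adj u v) (h1 : G.Adj u w)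
    (h2 : G.Adj w v) : G.dist u v = 2 := by
  have hle : G.dist u v ≤ 2 := by
    have := SimpleGraph.dist_le (SimpleGraph.Walk.cons h1 (SimpleGraph.Walk.cons h2 .nil))
    simpa using this
  have h0 : G.dist u v ≠ 0 := by
    intro hc
    have hr : G.Reachable u v := ⟨SimpleGraph.Walk.cons h1 (SimpleGraph.Walk.cons h2 .nil)⟩
    exact hne ((SimpleGraph.dist_eq_zero_iff_eq_or_not_reachable.mp hc).resolve_right
      (by simpa using hr))
  have h1' : G.dist u v ≠ 1 := fun hc => hna (SimpleGraph.dist_eq_one_iff_adj.mp hc)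
  omega

end general

section substar
variable {t : ℕ}

private lemma adj_none_some (i : Fin t) (j : Fin 4) :
    (subdividedStar t).Adj none (some (i, j)) ↔ j = 0 := by
  simp [subdividedStar, SimpleGraph.fromRel_adj]

private lemma adj_some_some (i i' : Fin t) (j k : Fin 4) :
    (subdividedStar t).Adj (some (i, j)) (some (i', k)) ↔
      i = i' ∧ ((j : ℕ) + 1 = (k : ℕ) ∨ (k : ℕ) + 1 = (j : ℕ)) := by
  simp only [subdividedStar, SimpleGraph.fromRel_adj, ne_eq, Option.some.injEq, Prod.mk.injEq]
  constructor
  · rintro ⟨hne, (⟨h, -⟩ | ⟨a, b, c, ⟨rfl, rfl⟩, ⟨rfl, rfl⟩, h3⟩) |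
      (⟨h, -⟩ | ⟨a, b, c, ⟨rfl, rfl⟩, ⟨rfl, rfl⟩, h3⟩)⟩
    · exact absurd h (by simp)
    · exact ⟨rfl, Or.inl h3⟩
    · exact absurd h (by simp)
    · exact ⟨rfl, Or.inr h3⟩
  · rintro ⟨rfl, h | h⟩
    · refine ⟨?_, Or.inl (Or.inr ⟨i, j, k, ⟨rfl, rfl⟩, ⟨rfl, rfl⟩, h⟩)⟩
      rintro ⟨-, rfl⟩; omega
    · refine ⟨?_, Or.inr (Or.inr ⟨i, k, j, ⟨rfl, rfl⟩, ⟨rfl, rfl⟩, h⟩)⟩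
      rintro ⟨-, rfl⟩; omega

private lemma nbr_three {u} {i : Fin t} (h : (subdividedStar t).Adj u (some (i, 3))) :
    u = some (i, 2) := by
  cases u with
  | none =>
    rw [adj_none_some] at h
    exact absurd h (by decide)
  | some p =>
    obtain ⟨i', j⟩ := p
    rw [adj_some_some] at h
    obtain ⟨rfl, h | h⟩ := h
    · have hj : j = 2 := by
        have := j.isLt
        have h3 : ((3 : Fin 4) : ℕ) = 3 := rfl
        rw [h3] at h
        exact Fin.ext (by omega)
      rw [hj]
    · exact absurd h (by revert h; have := j.isLt; intro h; omega)

private lemma nbr_two {u} {i : Fin t} (h : (subdividedStar t).Adj u (some (i, 2))) :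
    u = some (i, 1) ∨ u = some (i, 3) := by
  cases u with
  | none =>
    rw [adj_none_some] at h
    exact absurd h (by decide)
  | some p =>
    obtain ⟨i', j⟩ := p
    rw [adj_some_some] at h
    obtain ⟨rfl, h | h⟩ := h
    · left
      have h2 : ((2 : Fin 4) : ℕ) = 2 := rfl
      rw [h2] at h
      have hj : j = 1 := Fin.ext (by omega)
      rw [hj]
    · right
      have h2 : ((2 : Fin 4) : ℕ) = 2 := rfl
      rw [h2] at h
      have hj : j = 3 := Fin.ext (by have := j.isLt; omega)
      rw [hj]

private lemma nbr_one {u} {i : Fin t} (h : (subdividedStar t).Adj u (some (i, 1))) :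
    u = some (i, 0) ∨ u = some (i, 2) := by
  cases u with
  | none =>
    rw [adj_none_some] at h
    exact absurd h (by decide)
  | some p =>
    obtain ⟨i', j⟩ := p
    rw [adj_some_some] at h
    obtain ⟨rfl, h | h⟩ := h
    · left
      have h1 : ((1 : Fin 4) : ℕ) = 1 := rfl
      rw [h1] at h
      have hj : j = 0 := Fin.ext (by omega)
      rw [hj]
    · right
      have h1 : ((1 : Fin 4) : ℕ) = 1 := rfl
      rw [h1] at h
      have hj : j = 2 := Fin.ext (by have := j.isLt; omega)
      rw [hj]

private lemma forced_odd {S : Finset (Option (Fin t × Fin 4))}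
    (hS : (subdividedStar t).IsHopDominatingSet S) (i : Fin t) :
    some (i, 1) ∈ S ∨ some (i, 3) ∈ S := by
  by_contra hc
  push_neg at hc
  obtain ⟨h1, h3⟩ := hc
  obtain ⟨u, hu, hd⟩ := hS _ h3
  obtain ⟨w, hw1, hw2⟩ := exists_mid hd
  rw [nbr_three hw2] at hw1
  rcases nbr_two hw1 with rfl | rfl
  · exact h1 hu
  · rw [SimpleGraph.dist_self] at hd; omega

private lemma forced_even {S : Finset (Option (Fin t × Fin 4))}
    (hS : (subdividedStar t).IsHopDominatingSet S) (i : Fin t) :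
    some (i, 0) ∈ S ∨ some (i, 2) ∈ S := by
  by_contra hc
  push_neg at hc
  obtain ⟨h0, h2⟩ := hc
  obtain ⟨u, hu, hd⟩ := hS _ h2
  obtain ⟨w, hw1, hw2⟩ := exists_mid hd
  rcases nbr_two hw2 with rfl | rfl
  · rcases nbr_one hw1 with rfl | rfl
    · exact h0 hu
    · rw [SimpleGraph.dist_self] at hd; omega
  · rw [nbr_three hw1] at hd
    rw [SimpleGraph.dist_self] at hd; omega

private lemma lower_bound {S : Finset (Option (Fin t × Fin 4))}
    (hS : (subdividedStar t).IsHopDominatingSet S) : 2 * t ≤ S.card := by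
  classical
  set f : Fin t × Bool → Option (Fin t × Fin 4) := fun p =>
    if p.2 then (if some (p.1, 1) ∈ S then some (p.1, 1) else some (p.1, 3))
    else (if some (p.1, 0) ∈ S then some (p.1, 0) else some (p.1, 2)) with hf
  have hmem : ∀ p ∈ (Finset.univ : Finset (Fin t × Bool)), f p ∈ S := by
    rintro ⟨i, b⟩ -
    cases b with
    | true =>
      by_cases h : some (i, 1) ∈ S
      · simpa [hf, h] using h
      · simpa [hf, h] using (forced_odd hS i).resolve_left h
    | false =>
      by_cases h : some (i, 0) ∈ S
      · simpa [hf, h] using h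
      · simpa [hf, h] using (forced_even hS i).resolve_left h
  have hval : ∀ (i : Fin t) (b : Bool), ∃ j : Fin 4, f (i, b) = some (i, j) ∧
      (j : ℕ) % 2 = (if b then 1 else 0) := by
    intro i b
    cases b with
    | false =>
      by_cases h : some (i, 0) ∈ S
      · exact ⟨0, by simp [hf, h], by decide⟩
      · exact ⟨2, by simp [hf, h], by decide⟩
    | true =>
      by_cases h : some (i, 1) ∈ S
      · exact ⟨1, by simp [hf, h], by decide⟩
      · exact ⟨3, by simp [hf, h], by decide⟩
  have hinj : Set.InjOn f (Finset.univ : Finset (Fin t × Bool)) := by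
    rintro ⟨i, b⟩ - ⟨i', b'⟩ - h
    obtain ⟨j, hj, hjp⟩ := hval i b
    obtain ⟨j', hj', hjp'⟩ := hval i' b'
    rw [hj, hj'] at h
    simp only [Option.some.injEq, Prod.mk.injEq] at h
    obtain ⟨rfl, rfl⟩ := h
    rw [hjp] at hjp'
    cases b <;> cases b' <;> simp_all
  have hcard := Finset.card_le_card_of_injOn f hmem hinj
  have : (Finset.univ : Finset (Fin t × Bool)).card = 2 * t := by
    simp [Fintype.card_prod]; ring
  omega

end substar

theorem hop_domination_subdivided_star (t : ℕ) (ht : 1 ≤ t) :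
    Fintype.card (Option (Fin t × Fin 4)) = 4 * t + 1 ∧
    (subdividedStar t).hopDominationNumber = 2 * t ∧
    (subdividedStar t).hopDominationNumber =
      (Fintype.card (Option (Fin t × Fin 4)) - 1) / 2 := by
  classical
  have hcard : Fintype.card (Option (Fin t × Fin 4)) = 4 * t + 1 := by
    simp [Fintype.card_option, Fintype.card_prod]; ring
  -- the hop dominating set of size 2t
  set g : Fin t × Bool → Option (Fin t × Fin 4) :=
    fun p => some (p.1, if p.2 then 1 else 2) with hg
  have hginj : Function.Injective g := by
    rintro ⟨i, b⟩ ⟨i', b'⟩ h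
    simp only [hg, Option.some.injEq, Prod.mk.injEq] at h
    cases b <;> cases b' <;> simp_all
  set S : Finset (Option (Fin t × Fin 4)) := Finset.image g Finset.univ with hSdef
  have hScard : S.card = 2 * t := by
    rw [hSdef, Finset.card_image_of_injective _ hginj]
    simp [Fintype.card_prod]; ring
  have hmemS : ∀ i : Fin t, some (i, 1) ∈ S ∧ some (i, 2) ∈ S := by
    intro i
    constructor
    · exact Finset.mem_image.mpr ⟨(i, true), Finset.mem_univ _, rfl⟩
    · exact Finset.mem_image.mpr ⟨(i, false), Finset.mem_univ _, rfl⟩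
  have hdom : (subdividedStar t).IsHopDominatingSet S := by
    intro v hv
    cases v with
    | none =>
      set i0 : Fin t := ⟨0, ht⟩
      refine ⟨some (i0, 1), (hmemS i0).1, ?_⟩
      refine dist_eq_two' (by simp) ?_ (w := some (i0, 0)) ?_ ?_
      · intro h
        have := (adj_none_some i0 1).mp h.symm
        exact absurd this (by decide)
      · exact (adj_some_some i0 i0 1 0).mpr ⟨rfl, by decide⟩
      · exact ((adj_none_some i0 0).mpr rfl).symm
    | some p =>
      obtain ⟨i, j⟩ := p
      fin_cases j
      · -- j = 0
        refine ⟨some (i, 2), (hmemS i).2, ?_⟩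
        refine dist_eq_two' ?_ ?_ (w := some (i, 1)) ?_ ?_
        · simp only [ne_eq, Option.some.injEq, Prod.mk.injEq, not_and]
          intro; decide
        · intro h
          have := ((adj_some_some i i 2 0).mp h).2
          revert this; decide
        · exact (adj_some_some i i 2 1).mpr ⟨rfl, by decide⟩
        · exact (adj_some_some i i 1 0).mpr ⟨rfl, by decide⟩
      · exact absurd (hmemS i).1 hv
      · exact absurd (hmemS i).2 hv
      · -- j = 3
        refine ⟨some (i, 1), (hmemS i).1, ?_⟩
        refine dist_eq_two' ?_ ?_ (w := some (i, 2)) ?_ ?_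
        · simp only [ne_eq, Option.some.injEq, Prod.mk.injEq, not_and]
          intro; decide
        · intro h
          have := ((adj_some_some i i 1 3).mp h).2
          revert this; decide
        · exact (adj_some_some i i 1 2).mpr ⟨rfl, by decide⟩
        · exact (adj_some_some i i 2 3).mpr ⟨rfl, by decide⟩
  have hub : (subdividedStar t).hopDominationNumber ≤ 2 * t :=
    Nat.sInf_le ⟨S, hdom, hScard⟩
  have hlb : 2 * t ≤ (subdividedStar t).hopDominationNumber := by
    refine le_csInf ⟨2 * t, S, hdom, hScard⟩ ?_
    rintro k ⟨T, hT, rfl⟩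
    exact lower_bound hT
  have hnum : (subdividedStar t).hopDominationNumber = 2 * t := le_antisymm hub hlb
  exact ⟨hcard, hnum, by rw [hnum, hcard]; omega⟩
end

section
/- For every integer n ≥ 1 with n ∉ {1, 2, 3, 4, 7, 8, 9, 14}, the hop domination number of the path on n vertices satisfies γ_h(P_n) ≤ 2n/5 (i.e., 5·γ_h(P_n) ≤ 2n). -/
private lemma dist_path_two {n : ℕ} (u v : Fin n)
    (h : (u : ℕ) + 2 = (v : ℕ) ∨ (v : ℕ) + 2 = (u : ℕ)) :
    (SimpleGraph.pathGraph n).dist u v = 2 := by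
  have hne : u ≠ v := by
    intro h'
    have := congrArg Fin.val h'
    omega
  have hnadj : ¬ (SimpleGraph.pathGraph n).Adj u v := by
    rw [SimpleGraph.pathGraph_adj]
    omega
  -- build a walk of length 2 through the midpoint
  have hmid : ∃ w : Fin n, ((u : ℕ) + 1 = w ∨ (w : ℕ) + 1 = u) ∧
      ((w : ℕ) + 1 = v ∨ (v : ℕ) + 1 = w) := by
    rcases h with h | h
    · exact ⟨⟨(u : ℕ) + 1, by omega⟩, Or.inl rfl, Or.inl (by simp; omega)⟩
    · exact ⟨⟨(v : ℕ) + 1, by omega⟩, Or.inr (by simp; omega), Or.inr rfl⟩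
  obtain ⟨w, hw1, hw2⟩ := hmid
  have a1 : (SimpleGraph.pathGraph n).Adj u w := SimpleGraph.pathGraph_adj.2 hw1
  have a2 : (SimpleGraph.pathGraph n).Adj w v := SimpleGraph.pathGraph_adj.2 hw2
  have hreach : (SimpleGraph.pathGraph n).Reachable u v :=
    ⟨SimpleGraph.Walk.cons a1 (SimpleGraph.Walk.cons a2 SimpleGraph.Walk.nil)⟩
  have hle : (SimpleGraph.pathGraph n).dist u v ≤ 2 := by
    simpa using SimpleGraph.dist_le
      (SimpleGraph.Walk.cons a1 (SimpleGraph.Walk.cons a2 SimpleGraph.Walk.nil))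
  have hz : (SimpleGraph.pathGraph n).dist u v ≠ 0 :=
    fun h0 => hne (hreach.dist_eq_zero_iff.1 h0)
  have ho : (SimpleGraph.pathGraph n).dist u v ≠ 1 :=
    fun h1 => hnadj (SimpleGraph.dist_eq_one_iff_adj.1 h1)
  omega

private lemma count_mod6 (c n : ℕ) (hc : c < 6) :
    ((Finset.range n).filter (fun i => i % 6 = c)).card = (n + 5 - c) / 6 := by
  induction n with
  | zero => simp; omega
  | succ n ih =>
    rw [Finset.range_add_one, Finset.filter_insert]
    by_cases h : n % 6 = c
    · rw [if_pos h, Finset.card_insert_of_notMem (by simp)]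
      omega
    · rw [if_neg h]
      omega

theorem hop_domination_path_upper (n : ℕ) (hn : 1 ≤ n)
    (hex : n ∉ ({1, 2, 3, 4, 7, 8, 9, 14} : Finset ℕ)) :
    5 * (SimpleGraph.pathGraph n).hopDominationNumber ≤ 2 * n := by
  simp only [Finset.mem_insert, Finset.mem_singleton] at hex
  push_neg at hex
  obtain ⟨e1, e2, e3, e4, e7, e8, e9, e14⟩ := hex
  set s : Finset ℕ := (Finset.range n).filter
    (fun i => i % 6 = 2 ∨ (i % 6 = 3 ∨ (n ≤ i + 2 ∧ (i % 6 = 0 ∨ i % 6 = 1)))) with hs_def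
  have hs : ∀ m ∈ s, m < n := fun m hm => Finset.mem_range.1 (Finset.mem_filter.1 hm).1
  set S : Finset (Fin n) := s.attachFin hs with hS_def
  have hmemS : ∀ v : Fin n, v ∈ S ↔ ((v : ℕ) % 6 = 2 ∨ ((v : ℕ) % 6 = 3 ∨
      (n ≤ (v : ℕ) + 2 ∧ ((v : ℕ) % 6 = 0 ∨ (v : ℕ) % 6 = 1)))) := by
    intro v
    rw [hS_def, Finset.mem_attachFin, hs_def, Finset.mem_filter, Finset.mem_range]
    exact ⟨fun h => h.2, fun h => ⟨v.isLt, h⟩⟩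
  have hdom : (SimpleGraph.pathGraph n).IsHopDominatingSet S := by
    intro v hv
    rw [hmemS] at hv
    push_neg at hv
    by_cases hc : (v : ℕ) % 6 ≤ 1
    · -- use u = v + 2
      have hlt : (v : ℕ) + 2 < n := by omega
      refine ⟨⟨(v : ℕ) + 2, hlt⟩, ?_, dist_path_two _ _ (Or.inr (by simp))⟩
      rw [hmemS]
      simp only [Fin.val_mk]
      omega
    · -- v % 6 ∈ {4, 5}; use u = v - 2
      have h4 : 4 ≤ (v : ℕ) % 6 := by omega
      have h2v : 2 ≤ (v : ℕ) := by
        have := Nat.mod_le (v : ℕ) 6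
        omega
      refine ⟨⟨(v : ℕ) - 2, by omega⟩, ?_, dist_path_two _ _ (Or.inl (by simp; omega))⟩
      rw [hmemS]
      simp only [Fin.val_mk]
      omega
  have hnum : (SimpleGraph.pathGraph n).hopDominationNumber ≤ S.card :=
    Nat.sInf_le ⟨S, hdom, rfl⟩
  -- now bound the cardinality
  have hcard : S.card = s.card := Finset.card_attachFin _ _
  set t : Finset ℕ := (Finset.range n).filter
    (fun i => n ≤ i + 2 ∧ (i % 6 = 0 ∨ i % 6 = 1)) with ht_def
  have hsplit : s.card ≤ (n + 3) / 6 + (n + 2) / 6 + t.card := by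
    have hsub : s ⊆ ((Finset.range n).filter (fun i => i % 6 = 2)) ∪
        ((Finset.range n).filter (fun i => i % 6 = 3)) ∪ t := by
      intro i hi
      rw [hs_def, Finset.mem_filter] at hi
      simp only [Finset.mem_union, Finset.mem_filter, ht_def]
      tauto
    calc s.card ≤ _ := Finset.card_le_card hsub
      _ ≤ ((Finset.range n).filter (fun i => i % 6 = 2)).card +
          ((Finset.range n).filter (fun i => i % 6 = 3)).card + t.card := by
        refine le_trans (Finset.card_union_le _ _) ?_
        exact Nat.add_le_add_right (Finset.card_union_le _ _) _
      _ = (n + 3) / 6 + (n + 2) / 6 + t.card := by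
        rw [count_mod6 2 n (by norm_num), count_mod6 3 n (by norm_num)]
        omega
  have htmem : ∀ i ∈ t, n ≤ i + 2 ∧ i < n ∧ (i % 6 = 0 ∨ i % 6 = 1) := by
    intro i hi
    rw [ht_def, Finset.mem_filter, Finset.mem_range] at hi
    tauto
  have ht2 : t.card ≤ 2 := by
    have : t ⊆ {n - 2, n - 1} := by
      intro i hi
      have := htmem i hi
      simp only [Finset.mem_insert, Finset.mem_singleton]
      omega
    calc t.card ≤ ({n - 2, n - 1} : Finset ℕ).card := Finset.card_le_card this
      _ ≤ 2 := by
        refine le_trans (Finset.card_insert_le _ _) ?_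
        simp
  have ht0 : (n % 6 = 0 ∨ n % 6 = 4 ∨ n % 6 = 5) → t.card = 0 := by
    intro hr
    rw [Finset.card_eq_zero, Finset.filter_eq_empty_iff]
    intro i hi
    rw [Finset.mem_range] at hi
    omega
  have ht1 : (n % 6 = 1 ∨ n % 6 = 3) → t.card ≤ 1 := by
    intro hr
    have : t ⊆ {if n % 6 = 1 then n - 1 else n - 2} := by
      intro i hi
      have := htmem i hi
      simp only [Finset.mem_singleton]
      split <;> omega
    calc t.card ≤ _ := Finset.card_le_card this
      _ ≤ 1 := by simp
  have hfinal : 5 * s.card ≤ 2 * n := by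
    have hr : n % 6 = 0 ∨ n % 6 = 1 ∨ n % 6 = 2 ∨ n % 6 = 3 ∨ n % 6 = 4 ∨ n % 6 = 5 := by
      omega
    rcases hr with h | h | h | h | h | h
    · have := ht0 (Or.inl h); omega
    · have := ht1 (Or.inl h); omega
    · omega
    · have := ht1 (Or.inr h); omega
    · have := ht0 (Or.inr (Or.inl h)); omega
    · have := ht0 (Or.inr (Or.inr h)); omega
  omega
end
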